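/- Let P be a natural unit interval order on [1,n]. If w, w' ∈ S_n are connected by a single P-Knuth move, then |finv_P(w)| = |finv_P(w')|, where finv_P(w) = {(i,j) : j < i, w^{-1}(i) < w^{-1}(j), and i,j are P-incomparable}. Hence the fake P-inversion number is constant on P-Knuth equivalence classes. -/

import Mathlib

/-- `a` and `b` are incomparable with respect to the strict relation `P`. -/
def Incomp (P : ℕ → ℕ → Prop) (a b : ℕ) : Prop :=
  a ≠ b ∧ ¬ P a b ∧ ¬ P b a

/-- `P` is a natural unit interval order on `[1,n]`. -/
def NUIO (n : ℕ) (P : ℕ → ℕ → Prop) : Prop :=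
  (∀ a, ¬ P a a) ∧
  (∀ a b c, P a b → P b c → P a c) ∧
  (∀ a b, P a b → a < b) ∧
  (∀ a b c, a ∈ Finset.Icc 1 n → b ∈ Finset.Icc 1 n → c ∈ Finset.Icc 1 n →
    b < c → P b c → Incomp P a b → Incomp P a c → b < a ∧ a < c)


/-- A single P-Knuth move on a triple of consecutive letters. -/
def KnuthTriple (P : ℕ → ℕ → Prop) (x y : ℕ × ℕ × ℕ) : Prop :=
  ∃ a b c : ℕ, a < b ∧ b < c ∧ P a c ∧
    ((Incomp P a b ∧ Incomp P b c ∧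
        ((x, y) = ((b, c, a), (c, a, b)) ∨ (x, y) = ((c, a, b), (b, c, a)))) ∨
     (P a b ∧ Incomp P b c ∧
        ((x, y) = ((b, c, a), (b, a, c)) ∨ (x, y) = ((b, a, c), (b, c, a)) ∨
         (x, y) = ((c, b, a), (c, a, b)) ∨ (x, y) = ((c, a, b), (c, b, a)))) ∨
     (Incomp P a b ∧ P b c ∧
        ((x, y) = ((b, c, a), (c, b, a)) ∨ (x, y) = ((c, b, a), (b, c, a)) ∨
         (x, y) = ((a, c, b), (c, a, b)) ∨ (x, y) = ((c, a, b), (a, c, b)))) ∨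
     (P a b ∧ P b c ∧
        ((x, y) = ((b, c, a), (b, a, c)) ∨ (x, y) = ((b, a, c), (b, c, a)) ∨
         (x, y) = ((a, c, b), (c, a, b)) ∨ (x, y) = ((c, a, b), (a, c, b)))))

/-- Two words (lists) are connected by a single P-Knuth move: three consecutive letters
are rewritten by a P-Knuth triple move, all other letters fixed. -/
def KnuthMoveL (P : ℕ → ℕ → Prop) (w w2 : List ℕ) : Prop :=
  ∃ (l1 l2 : List ℕ) (x1 x2 x3 y1 y2 y3 : ℕ),
    w = l1 ++ [x1, x2, x3] ++ l2 ∧ w2 = l1 ++ [y1, y2, y3] ++ l2 ∧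
    KnuthTriple P (x1, x2, x3) (y1, y2, y3)

/-- i appears (strictly) before j in the word w. -/
def Before (w : List ℕ) (i j : ℕ) : Prop :=
  ∃ l1 l2 l3 : List ℕ, w = l1 ++ i :: (l2 ++ j :: l3)

/-- The set of fake P-inversions of a word w: pairs (i,j) with j < i, i before j in w,
and i, j P-incomparable. -/
def finvSet (P : ℕ → ℕ → Prop) (w : List ℕ) : Set (ℕ × ℕ) :=
  {p : ℕ × ℕ | p.2 < p.1 ∧ Incomp P p.1 p.2 ∧ Before w p.1 p.2}

namespace Stmt11Aux

lemma before_iff_sublist (w : List ℕ) (i j : ℕ) :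
    Before w i j ↔ List.Sublist [i, j] w := by
  constructor
  · rintro ⟨l1, l2, l3, rfl⟩
    have h2 : List.Sublist [j] (l2 ++ j :: l3) :=
      (List.Sublist.cons₂ _ (List.nil_sublist _)).trans (List.sublist_append_right _ _)
    have h1 : List.Sublist [i, j] (i :: (l2 ++ j :: l3)) := List.Sublist.cons₂ _ h2
    exact h1.trans (List.sublist_append_right _ _) |>.trans ((l1 ++ _).sublist_append_left [] |>.trans (by simp))
  · intro h
    induction w with
    | nil => simp at h
    | cons a t ih =>
      rcases h with _ | ⟨h'⟩
      case cons h' =>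
        obtain ⟨m1, m2, m3, rfl⟩ := ih h'
        exact ⟨a :: m1, m2, m3, rfl⟩
      case cons_cons =>
        rename_i h'
        have hj : j ∈ t := List.singleton_sublist.mp h'
        obtain ⟨s, r, rfl⟩ := List.append_of_mem hj
        exact ⟨[], s, r, rfl⟩

lemma sublist_pair_iff (i j : ℕ) (A B : List ℕ) :
    List.Sublist [i, j] (A ++ B) ↔ List.Sublist [i, j] A ∨ (i ∈ A ∧ j ∈ B) ∨ List.Sublist [i, j] B := by
  rw [List.sublist_append_iff]
  constructor
  · rintro ⟨u, v, huv, hu, hv⟩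
    rcases u with _ | ⟨x, _ | ⟨y, u⟩⟩
    · right; right; rw [show v = [i,j] from by simpa using huv.symm] at hv; exact hv
    · simp only [List.cons_append, List.nil_append, List.cons.injEq] at huv
      obtain ⟨rfl, hv'⟩ := huv
      right; left
      exact ⟨List.singleton_sublist.mp hu, List.singleton_sublist.mp (hv' ▸ hv)⟩
    · simp only [List.cons_append, List.cons.injEq] at huv
      obtain ⟨rfl, rfl, huv2⟩ := huv
      obtain ⟨rfl, rfl⟩ := List.append_eq_nil_iff.mp huv2.symm
      left; simpa using hu
  · rintro (h | ⟨hi, hj⟩ | h)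
    · exact ⟨[i,j], [], by simp, h, by simp⟩
    · exact ⟨[i], [j], rfl, List.singleton_sublist.mpr hi, List.singleton_sublist.mpr hj⟩
    · exact ⟨[], [i,j], rfl, by simp, h⟩

lemma before_mem {w : List ℕ} {i j : ℕ} (h : Before w i j) : i ∈ w ∧ j ∈ w := by
  rw [before_iff_sublist] at h
  exact ⟨h.subset (by simp), h.subset (by simp)⟩

lemma finv_finite (P : ℕ → ℕ → Prop) (w : List ℕ) : (finvSet P w).Finite := by
  apply Set.Finite.subset (Set.Finite.prod w.finite_toSet w.finite_toSet)
  rintro ⟨i, j⟩ ⟨_, _, hb⟩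
  exact ⟨(before_mem hb).1, (before_mem hb).2⟩

lemma mid_sublist (l1 mid l2 : List ℕ) : List.Sublist mid (l1 ++ mid ++ l2) := by
  rw [List.append_assoc]
  exact (List.sublist_append_left mid l2).trans (List.sublist_append_right l1 (mid ++ l2))

lemma nodup_parts {l1 mid l2 : List ℕ} (hnd : (l1 ++ mid ++ l2).Nodup) :
    (∀ x ∈ mid, x ∉ l1) ∧ (∀ x ∈ mid, x ∉ l2) := by
  rw [List.append_assoc, List.nodup_append] at hnd
  obtain ⟨_, hnd2, hdisj⟩ := hnd
  rw [List.nodup_append] at hnd2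
  exact ⟨fun x hx hx1 => hdisj x hx1 x (List.mem_append_left _ hx) rfl,
         fun x hx hx2 => hnd2.2.2 x hx x hx2 rfl⟩

lemma finv_split (P : ℕ → ℕ → Prop) (l1 mid l2 : List ℕ) (hnd : (l1 ++ mid ++ l2).Nodup) :
    finvSet P (l1 ++ mid ++ l2) =
      {p ∈ finvSet P (l1 ++ mid ++ l2) | ¬(p.1 ∈ mid ∧ p.2 ∈ mid)} ∪ finvSet P mid := by
  obtain ⟨hm1, hm2⟩ := nodup_parts hnd
  ext ⟨i, j⟩
  simp only [Set.mem_union, Set.mem_setOf_eq, finvSet, Set.sep_setOf]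
  constructor
  · intro h
    by_cases hm : i ∈ mid ∧ j ∈ mid
    · right
      refine ⟨h.1, h.2.1, ?_⟩
      have hb := h.2.2
      rw [before_iff_sublist] at hb ⊢
      rw [List.append_assoc, sublist_pair_iff, sublist_pair_iff] at hb
      rcases hb with h' | ⟨h', _⟩ | h' | ⟨_, h'⟩ | h'
      · exact absurd (h'.subset (by simp)) (hm1 i hm.1)
      · exact absurd h' (hm1 i hm.1)
      · exact h'
      · exact absurd h' (hm2 j hm.2)
      · exact absurd (h'.subset (by simp)) (hm2 i hm.1)
    · left; exact ⟨h, hm⟩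
  · rintro (⟨h, _⟩ | h)
    · exact h
    · refine ⟨h.1, h.2.1, ?_⟩
      rw [before_iff_sublist] at *
      exact h.2.2.trans (mid_sublist l1 mid l2)

lemma C_eq (P : ℕ → ℕ → Prop) (l1 l2 mid mid' : List ℕ) (hp : mid.Perm mid') :
    {p ∈ finvSet P (l1 ++ mid ++ l2) | ¬(p.1 ∈ mid ∧ p.2 ∈ mid)} =
    {p ∈ finvSet P (l1 ++ mid' ++ l2) | ¬(p.1 ∈ mid' ∧ p.2 ∈ mid')} := by
  ext ⟨i, j⟩
  simp only [Set.mem_setOf_eq, finvSet, before_iff_sublist, Set.sep_setOf]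
  have hmi : i ∈ mid ↔ i ∈ mid' := hp.mem_iff
  have hmj : j ∈ mid ↔ j ∈ mid' := hp.mem_iff
  have k1 : List.Sublist [i,j] mid → i ∈ mid ∧ j ∈ mid :=
    fun h => ⟨h.subset (by simp), h.subset (by simp)⟩
  have k2 : List.Sublist [i,j] mid' → i ∈ mid' ∧ j ∈ mid' :=
    fun h => ⟨h.subset (by simp), h.subset (by simp)⟩
  rw [List.append_assoc, List.append_assoc, sublist_pair_iff, sublist_pair_iff,
      sublist_pair_iff, sublist_pair_iff]
  simp only [List.mem_append]
  constructor
  · rintro ⟨⟨h1, h2, h3⟩, hm⟩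
    refine ⟨⟨h1, h2, ?_⟩, fun hc => hm ⟨hmi.mpr hc.1, hmj.mpr hc.2⟩⟩
    rcases h3 with h | ⟨hi, hj⟩ | h | ⟨hi, hj⟩ | h
    · exact Or.inl h
    · exact Or.inr (Or.inl ⟨hi, hj.imp hmj.mp id⟩)
    · exact absurd (k1 h) hm
    · exact Or.inr (Or.inr (Or.inr (Or.inl ⟨hmi.mp hi, hj⟩)))
    · exact Or.inr (Or.inr (Or.inr (Or.inr h)))
  · rintro ⟨⟨h1, h2, h3⟩, hm⟩
    refine ⟨⟨h1, h2, ?_⟩, fun hc => hm ⟨hmi.mp hc.1, hmj.mp hc.2⟩⟩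
    rcases h3 with h | ⟨hi, hj⟩ | h | ⟨hi, hj⟩ | h
    · exact Or.inl h
    · exact Or.inr (Or.inl ⟨hi, hj.imp hmj.mpr id⟩)
    · exact absurd (k2 h) hm
    · exact Or.inr (Or.inr (Or.inr (Or.inl ⟨hmi.mpr hi, hj⟩)))
    · exact Or.inr (Or.inr (Or.inr (Or.inr h)))

lemma main_aux (P : ℕ → ℕ → Prop) (l1 l2 mid mid' : List ℕ) (hp : mid.Perm mid')
    (hnd : (l1 ++ mid ++ l2).Nodup)
    (hA : (finvSet P mid).ncard = (finvSet P mid').ncard) :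
    (finvSet P (l1 ++ mid ++ l2)).ncard = (finvSet P (l1 ++ mid' ++ l2)).ncard := by
  have hpw : (l1 ++ mid ++ l2).Perm (l1 ++ mid' ++ l2) := by
    rw [List.append_assoc, List.append_assoc]
    exact (hp.append_right l2).append_left l1
  have hnd' : (l1 ++ mid' ++ l2).Nodup := hpw.nodup_iff.mp hnd
  rw [finv_split P l1 mid l2 hnd, finv_split P l1 mid' l2 hnd',
      C_eq P l1 l2 mid mid' hp]
  have hd1 : Disjoint {p ∈ finvSet P (l1 ++ mid' ++ l2) | ¬(p.1 ∈ mid' ∧ p.2 ∈ mid')} (finvSet P mid) := by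
    rw [Set.disjoint_left]
    rintro ⟨i, j⟩ ⟨_, hm⟩ hmem
    have hb := hmem.2.2
    rw [before_iff_sublist] at hb
    exact hm ⟨hp.mem_iff.mp (hb.subset (by simp)), hp.mem_iff.mp (hb.subset (by simp))⟩
  have hd2 : Disjoint {p ∈ finvSet P (l1 ++ mid' ++ l2) | ¬(p.1 ∈ mid' ∧ p.2 ∈ mid')} (finvSet P mid') := by
    rw [Set.disjoint_left]
    rintro ⟨i, j⟩ ⟨_, hm⟩ hmem
    have hb := hmem.2.2
    rw [before_iff_sublist] at hb
    exact hm ⟨hb.subset (by simp), hb.subset (by simp)⟩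
  have hf0 : {p ∈ finvSet P (l1 ++ mid' ++ l2) | ¬(p.1 ∈ mid' ∧ p.2 ∈ mid')}.Finite :=
    Set.Finite.subset (finv_finite P (l1 ++ mid' ++ l2)) (fun q hq => hq.1)
  rw [Set.ncard_union_eq hd1 hf0 (finv_finite P mid),
      Set.ncard_union_eq hd2 hf0 (finv_finite P mid'), hA]

lemma finv_triple (P : ℕ → ℕ → Prop) (u v z : ℕ) :
    finvSet P [u, v, z] =
      {p : ℕ × ℕ | (p = (u,v) ∨ p = (u,z) ∨ p = (v,z)) ∧ p.2 < p.1 ∧ Incomp P p.1 p.2} := by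
  ext ⟨i, j⟩
  simp only [finvSet, Set.mem_setOf_eq, before_iff_sublist, Prod.mk.injEq]
  have key : List.Sublist [i,j] [u,v,z] ↔ (i=u∧j=v) ∨ (i=u∧j=z) ∨ (i=v∧j=z) := by
    rw [show ([u,v,z] : List ℕ) = [u] ++ [v,z] from rfl, sublist_pair_iff]
    constructor
    · rintro (h | ⟨hi, hj⟩ | h)
      · exact absurd h.length_le (by simp)
      · simp only [List.mem_singleton] at hi
        simp only [List.mem_cons, List.mem_singleton, List.not_mem_nil, or_false] at hj
        tauto
      · have := h.eq_of_length (by simp)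
        simp only [List.cons.injEq, and_true] at this
        tauto
    · rintro (⟨rfl, rfl⟩ | ⟨rfl, rfl⟩ | ⟨rfl, rfl⟩)
      · right; left; simp
      · right; left; simp
      · right; right; exact List.Sublist.refl _
  rw [key]; tauto

lemma incomp_symm {P : ℕ → ℕ → Prop} {a b : ℕ} (h : Incomp P a b) : Incomp P b a :=
  ⟨h.1.symm, h.2.2, h.2.1⟩

lemma triple_empty (P : ℕ → ℕ → Prop) (u v z : ℕ)
    (h1 : ¬(v < u ∧ Incomp P u v)) (h2 : ¬(z < u ∧ Incomp P u z)) (h3 : ¬(z < v ∧ Incomp P v z)) :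
    finvSet P [u, v, z] = ∅ := by
  rw [finv_triple]
  ext ⟨i, j⟩
  simp only [Set.mem_setOf_eq, Set.mem_empty_iff_false, iff_false, Prod.mk.injEq, not_and]
  rintro (⟨rfl, rfl⟩ | ⟨rfl, rfl⟩ | ⟨rfl, rfl⟩) hlt hic
  · exact h1 ⟨hlt, hic⟩
  · exact h2 ⟨hlt, hic⟩
  · exact h3 ⟨hlt, hic⟩

lemma triple_single₁ (P : ℕ → ℕ → Prop) (u v z : ℕ)
    (h1 : v < u ∧ Incomp P u v) (h2 : ¬(z < u ∧ Incomp P u z)) (h3 : ¬(z < v ∧ Incomp P v z)) :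
    finvSet P [u, v, z] = {(u, v)} := by
  rw [finv_triple]
  ext ⟨i, j⟩
  simp only [Set.mem_setOf_eq, Set.mem_singleton_iff, Prod.mk.injEq]
  constructor
  · rintro ⟨(⟨rfl, rfl⟩ | ⟨rfl, rfl⟩ | ⟨rfl, rfl⟩), hlt, hic⟩
    · exact ⟨rfl, rfl⟩
    · exact absurd ⟨hlt, hic⟩ h2
    · exact absurd ⟨hlt, hic⟩ h3
  · rintro ⟨rfl, rfl⟩
    exact ⟨Or.inl ⟨rfl, rfl⟩, h1.1, h1.2⟩

lemma triple_single₂ (P : ℕ → ℕ → Prop) (u v z : ℕ)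
    (h1 : ¬(v < u ∧ Incomp P u v)) (h2 : z < u ∧ Incomp P u z) (h3 : ¬(z < v ∧ Incomp P v z)) :
    finvSet P [u, v, z] = {(u, z)} := by
  rw [finv_triple]
  ext ⟨i, j⟩
  simp only [Set.mem_setOf_eq, Set.mem_singleton_iff, Prod.mk.injEq]
  constructor
  · rintro ⟨(⟨rfl, rfl⟩ | ⟨rfl, rfl⟩ | ⟨rfl, rfl⟩), hlt, hic⟩
    · exact absurd ⟨hlt, hic⟩ h1
    · exact ⟨rfl, rfl⟩
    · exact absurd ⟨hlt, hic⟩ h3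
  · rintro ⟨rfl, rfl⟩
    exact ⟨Or.inr (Or.inl ⟨rfl, rfl⟩), h2.1, h2.2⟩

lemma triple_single₃ (P : ℕ → ℕ → Prop) (u v z : ℕ)
    (h1 : ¬(v < u ∧ Incomp P u v)) (h2 : ¬(z < u ∧ Incomp P u z)) (h3 : z < v ∧ Incomp P v z) :
    finvSet P [u, v, z] = {(v, z)} := by
  rw [finv_triple]
  ext ⟨i, j⟩
  simp only [Set.mem_setOf_eq, Set.mem_singleton_iff, Prod.mk.injEq]
  constructor
  · rintro ⟨(⟨rfl, rfl⟩ | ⟨rfl, rfl⟩ | ⟨rfl, rfl⟩), hlt, hic⟩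
    · exact absurd ⟨hlt, hic⟩ h1
    · exact absurd ⟨hlt, hic⟩ h2
    · exact ⟨rfl, rfl⟩
  · rintro ⟨rfl, rfl⟩
    exact ⟨Or.inr (Or.inr ⟨rfl, rfl⟩), h3.1, h3.2⟩


lemma swap12 (x y z : ℕ) : List.Perm [x,y,z] [y,x,z] := List.Perm.swap y x [z]
lemma swap23 (x y z : ℕ) : List.Perm [x,y,z] [x,z,y] := List.Perm.cons x (List.Perm.swap z y [])

lemma knuth_ncard (P : ℕ → ℕ → Prop) (x1 x2 x3 y1 y2 y3 : ℕ)
    (h : ∃ a b c : ℕ, a < b ∧ b < c ∧ P a c ∧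
    ((Incomp P a b ∧ Incomp P b c ∧
        (((x1,x2,x3), (y1,y2,y3)) = ((b, c, a), (c, a, b)) ∨ ((x1,x2,x3), (y1,y2,y3)) = ((c, a, b), (b, c, a)))) ∨
     (P a b ∧ Incomp P b c ∧
        (((x1,x2,x3), (y1,y2,y3)) = ((b, c, a), (b, a, c)) ∨ ((x1,x2,x3), (y1,y2,y3)) = ((b, a, c), (b, c, a)) ∨
         ((x1,x2,x3), (y1,y2,y3)) = ((c, b, a), (c, a, b)) ∨ ((x1,x2,x3), (y1,y2,y3)) = ((c, a, b), (c, b, a)))) ∨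
     (Incomp P a b ∧ P b c ∧
        (((x1,x2,x3), (y1,y2,y3)) = ((b, c, a), (c, b, a)) ∨ ((x1,x2,x3), (y1,y2,y3)) = ((c, b, a), (b, c, a)) ∨
         ((x1,x2,x3), (y1,y2,y3)) = ((a, c, b), (c, a, b)) ∨ ((x1,x2,x3), (y1,y2,y3)) = ((c, a, b), (a, c, b)))) ∨
     (P a b ∧ P b c ∧
        (((x1,x2,x3), (y1,y2,y3)) = ((b, c, a), (b, a, c)) ∨ ((x1,x2,x3), (y1,y2,y3)) = ((b, a, c), (b, c, a)) ∨
         ((x1,x2,x3), (y1,y2,y3)) = ((a, c, b), (c, a, b)) ∨ ((x1,x2,x3), (y1,y2,y3)) = ((c, a, b), (a, c, b)))))) :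
    List.Perm [x1,x2,x3] [y1,y2,y3] ∧
      (finvSet P [x1,x2,x3]).ncard = (finvSet P [y1,y2,y3]).ncard := by
  obtain ⟨a, b, c, ha, hb, hac, hcase⟩ := h
  have hacn : ¬(a < c ∧ Incomp P c a) := fun h' => h'.2.2.2 hac
  have hcb : ¬(c < b) := fun h' => absurd hb (Nat.lt_asymm h')
  have hba : ¬(b < a) := fun h' => absurd ha (Nat.lt_asymm h')
  have hca : ¬(c < a) := fun h' => absurd (ha.trans hb) (Nat.lt_asymm h')
  rcases hcase with ⟨hab, hbc, heq⟩ | ⟨hab, hbc, heq⟩ | ⟨hab, hbc, heq⟩ | ⟨hab, hbc, heq⟩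
  · -- case 1: a ∥ b, b ∥ c
    have e1 : finvSet P [b,c,a] = {(b,a)} :=
      triple_single₂ P b c a (fun h' => hcb h'.1) ⟨ha, incomp_symm hab⟩ hacn
    have e2 : finvSet P [c,a,b] = {(c,b)} :=
      triple_single₂ P c a b hacn ⟨hb, incomp_symm hbc⟩ (fun h' => hba h'.1)
    rcases heq with heq | heq <;>
      simp only [Prod.mk.injEq] at heq <;>
      obtain ⟨⟨h1, h2, h3⟩, h4, h5, h6⟩ := heq <;>
      rw [h1, h2, h3, h4, h5, h6]
    · exact ⟨(swap12 b c a).trans (swap23 c b a), by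
        rw [e1, e2, Set.ncard_singleton, Set.ncard_singleton]⟩
    · exact ⟨((swap12 b c a).trans (swap23 c b a)).symm, by
        rw [e1, e2, Set.ncard_singleton, Set.ncard_singleton]⟩
  · -- case 2: a ≺ b, b ∥ c
    have hban : ¬(a < b ∧ Incomp P b a) := fun h' => h'.2.2.2 hab
    have e1 : finvSet P [b,c,a] = ∅ :=
      triple_empty P b c a (fun h' => hcb h'.1) hban hacn
    have e2 : finvSet P [b,a,c] = ∅ :=
      triple_empty P b a c hban (fun h' => hcb h'.1) (fun h' => hca h'.1)
    have e3 : finvSet P [c,b,a] = {(c,b)} :=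
      triple_single₁ P c b a ⟨hb, incomp_symm hbc⟩ hacn hban
    have e4 : finvSet P [c,a,b] = {(c,b)} :=
      triple_single₂ P c a b hacn ⟨hb, incomp_symm hbc⟩ (fun h' => hba h'.1)
    rcases heq with heq | heq | heq | heq <;>
      simp only [Prod.mk.injEq] at heq <;>
      obtain ⟨⟨h1, h2, h3⟩, h4, h5, h6⟩ := heq <;>
      rw [h1, h2, h3, h4, h5, h6]
    · exact ⟨swap23 b c a, by rw [e1, e2]⟩
    · exact ⟨(swap23 b c a).symm, by rw [e1, e2]⟩
    · exact ⟨swap23 c b a, by rw [e3, e4]⟩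
    · exact ⟨(swap23 c b a).symm, by rw [e3, e4]⟩
  · -- case 3: a ∥ b, b ≺ c
    have hcbn : ¬(b < c ∧ Incomp P c b) := fun h' => h'.2.2.2 hbc
    have e1 : finvSet P [b,c,a] = {(b,a)} :=
      triple_single₂ P b c a (fun h' => hcb h'.1) ⟨ha, incomp_symm hab⟩ hacn
    have e2 : finvSet P [c,b,a] = {(b,a)} :=
      triple_single₃ P c b a hcbn hacn ⟨ha, incomp_symm hab⟩
    have e3 : finvSet P [a,c,b] = ∅ :=
      triple_empty P a c b (fun h' => hca h'.1) (fun h' => hba h'.1) hcbn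
    have e4 : finvSet P [c,a,b] = ∅ :=
      triple_empty P c a b hacn hcbn (fun h' => hba h'.1)
    rcases heq with heq | heq | heq | heq <;>
      simp only [Prod.mk.injEq] at heq <;>
      obtain ⟨⟨h1, h2, h3⟩, h4, h5, h6⟩ := heq <;>
      rw [h1, h2, h3, h4, h5, h6]
    · exact ⟨swap12 b c a, by rw [e1, e2]⟩
    · exact ⟨(swap12 b c a).symm, by rw [e1, e2]⟩
    · exact ⟨swap12 a c b, by rw [e3, e4]⟩
    · exact ⟨(swap12 a c b).symm, by rw [e3, e4]⟩
  · -- case 4: a ≺ b ≺ c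
    have hban : ¬(a < b ∧ Incomp P b a) := fun h' => h'.2.2.2 hab
    have hcbn : ¬(b < c ∧ Incomp P c b) := fun h' => h'.2.2.2 hbc
    have e1 : finvSet P [b,c,a] = ∅ :=
      triple_empty P b c a (fun h' => hcb h'.1) hban hacn
    have e2 : finvSet P [b,a,c] = ∅ :=
      triple_empty P b a c hban (fun h' => hcb h'.1) (fun h' => hca h'.1)
    have e3 : finvSet P [a,c,b] = ∅ :=
      triple_empty P a c b (fun h' => hca h'.1) (fun h' => hba h'.1) hcbn
    have e4 : finvSet P [c,a,b] = ∅ :=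
      triple_empty P c a b hacn hcbn (fun h' => hba h'.1)
    rcases heq with heq | heq | heq | heq <;>
      simp only [Prod.mk.injEq] at heq <;>
      obtain ⟨⟨h1, h2, h3⟩, h4, h5, h6⟩ := heq <;>
      rw [h1, h2, h3, h4, h5, h6]
    · exact ⟨swap23 b c a, by rw [e1, e2]⟩
    · exact ⟨(swap23 b c a).symm, by rw [e1, e2]⟩
    · exact ⟨swap12 a c b, by rw [e3, e4]⟩
    · exact ⟨(swap12 a c b).symm, by rw [e3, e4]⟩

end Stmt11Aux


/-- A single P-Knuth move preserves the fake P-inversion number. -/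
theorem stmt11 (n : ℕ) (P : ℕ → ℕ → Prop) (hP : NUIO n P)
    (w w' : List ℕ) (hperm : w.Perm (List.range' 1 n))
    (hmove : KnuthMoveL P w w') :
    (finvSet P w).ncard = (finvSet P w').ncard := by
  obtain ⟨l1, l2, x1, x2, x3, y1, y2, y3, rfl, rfl, htrip⟩ := hmove
  obtain ⟨hpm, hA⟩ := Stmt11Aux.knuth_ncard P x1 x2 x3 y1 y2 y3 htrip
  exact Stmt11Aux.main_aux P l1 l2 [x1, x2, x3] [y1, y2, y3] hpm
    (hperm.nodup_iff.mpr (List.nodup_range' (s := 1) (n := n))) hA
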